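/- For codes C_i over the component rings R_i of a finite product ring R = ∏ R_i, the dual of the Chinese product satisfies CRT(C₁,…,C_k)^⊥ = CRT(C₁^⊥,…,C_k^⊥). -/
import Mathlib

theorem stmt_13 (ι : Type*) [Fintype ι] (R : ι → Type*) [∀ i, CommRing (R i)]
    [∀ i, Fintype (R i)] (n : ℕ)
    (C : ∀ i, Submodule (R i) (Fin n → R i)) :
    {u : Fin n → ∀ i, R i |
        ∀ v ∈ {c : Fin n → ∀ i, R i | ∀ i, (fun j => c j i) ∈ C i},
          ∑ j, u j * v j = 0} =
      {u : Fin n → ∀ i, R i |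
        ∀ i, (fun j => u j i) ∈ {w : Fin n → R i | ∀ v ∈ C i, ∑ j, w j * v j = 0}} := by
  classical
  ext u
  simp only [Set.mem_setOf_eq]
  constructor
  · intro h i v hv
    have h0 := h (fun j => Pi.single i (v j)) ?_
    · have := congrFun h0 i
      simpa [Finset.sum_apply] using this
    · intro i'
      by_cases hi : i' = i
      · subst hi; simpa using hv
      · have : (fun j => Pi.single i (v j) i') = (0 : Fin n → R i') := by
          funext j; simp [Pi.single_eq_of_ne hi]
        rw [this]; exact Submodule.zero_mem _
  · intro h v hv
    funext i
    have := h i _ (hv i)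
    simpa [Finset.sum_apply] using this
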